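/- Suppose p is a mixed strategy profile in which every action in each player's support is an η-aggregative best response to S(p). Let x be a pure profile sampled from p. If ||S(x) - S(p)||_∞ ≤ E, then x is an (η + 2E + γ)-approximate pure strategy Nash equilibrium. -/
import Mathlib

/-- Suppose in the mixed profile `p` every action in each player's support is
an η-aggregative best response to the expected aggregator `sp = S(p)`; let `x`
be a pure profile sampled from `p` (so each `x i` lies in the support of
`p i`), and suppose `‖S(x) - sp‖∞ ≤ E`.  Then `x` is an
(η + 2E + γ)-approximate pure strategy Nash equilibrium. -/
theorem sampled_profile_is_approx_nash
    {I A K : Type*} [DecidableEq I]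
    (S : (I → A) → K → ℝ) (u : I → A → (K → ℝ) → ℝ) (γ η E : ℝ)
    (hinfl : ∀ (j : I) (a : A) (y : I → A) (k : K),
      |S (Function.update y j a) k - S y k| ≤ γ)
    (hlip : ∀ (j : I) (a : A) (s s' : K → ℝ) (c : ℝ),
      (∀ k, |s k - s' k| ≤ c) → |u j a s - u j a s'| ≤ c)
    (sp : K → ℝ) (x : I → A)
    (habr : ∀ (i : I) (a : A), u i (x i) sp ≥ u i a sp - η)
    (hconc : ∀ k, |S x k - sp k| ≤ E) :
    ∀ (i : I) (a : A),
      u i (x i) (S x) ≥ u i a (S (Function.update x i a)) - (η + 2 * E + γ) := by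
  intro i a
  have h1 : |u i (x i) (S x) - u i (x i) sp| ≤ E := hlip _ _ _ _ _ hconc
  have h2 : |u i a (S x) - u i a sp| ≤ E := hlip _ _ _ _ _ hconc
  have h3 : |u i a (S (Function.update x i a)) - u i a (S x)| ≤ γ :=
    hlip _ _ _ _ _ (fun k => hinfl i a x k)
  have h4 := habr i a
  have e1 := abs_le.mp h1
  have e2 := abs_le.mp h2
  have e3 := abs_le.mp h3
  linarith [e1.1, e1.2, e2.1, e2.2, e3.1, e3.2]
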